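/- Let Q ∈ SU(3,1), let λ ∈ ℂ with Re(λ) > 0, φ ∈ ℝ, and let A = Q·E(λ,φ)·Q⁻¹, so that A is loxodromic with eigen-data a_A = Q·e₁, x_A = Q·e₂, y_A = Q·e₃, r_A = Q·e₄. Let B ∈ SU(3,1) be such that the pair (A, B·A⁻¹·B⁻¹) is non-singular, where B·A⁻¹·B⁻¹ carries the eigen-data a = B·r_A, x = B·x_A, y = B·y_A, r = B·a_A. Let κ, κ′ ∈ ℂ with Im(κ), Im(κ′) ∈ (−π,π], let ψ, ψ′ ∈ (−π,π], and set K = Q·E(κ,ψ)·Q⁻¹ and K′ = Q·E(κ′,ψ′)·Q⁻¹. Then there exists D ∈ SU(3,1) with D·A·D⁻¹ = A and D·(B·K)·D⁻¹ = B·K′ if and only if κ = κ′ and ψ = ψ′. -/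
import Mathlib


open Complex ComplexConjugate Matrix Polynomial

noncomputable section

abbrev Vec4 := Fin 4 → ℂ
abbrev Mat4 := Matrix (Fin 4) (Fin 4) ℂ

/-- The Hermitian form of signature (3,1):
`⟨z,w⟩ = z₁·conj(w₄) + z₂·conj(w₂) + z₃·conj(w₃) + z₄·conj(w₁)`. -/
def hermForm (z w : Vec4) : ℂ :=
  z 0 * conj (w 3) + z 1 * conj (w 1) + z 2 * conj (w 2) + z 3 * conj (w 0)

/-- The matrix of the Hermitian form. -/
def Hmat : Mat4 := !![0,0,0,1; 0,1,0,0; 0,0,1,0; 1,0,0,0]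

/-- `A ∈ SU(3,1)`: `(conj A)ᵀ H A = H` and `det A = 1`. -/
def isSU31 (A : Mat4) : Prop := Aᴴ * Hmat * A = Hmat ∧ A.det = 1

/-- Koranyi-Riemann cross-ratio. -/
def crossRatio (z1 z2 z3 z4 : Vec4) : ℂ :=
  (hermForm z3 z1 * hermForm z4 z2) / (hermForm z4 z1 * hermForm z3 z2)

/-- No two of the four vectors are complex multiples of one another. -/
def PairwiseNotProp4 (z1 z2 z3 z4 : Vec4) : Prop :=
  (∀ c : ℂ, z1 ≠ c • z2) ∧ (∀ c : ℂ, z1 ≠ c • z3) ∧ (∀ c : ℂ, z1 ≠ c • z4) ∧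
  (∀ c : ℂ, z2 ≠ c • z3) ∧ (∀ c : ℂ, z2 ≠ c • z4) ∧ (∀ c : ℂ, z3 ≠ c • z4)

/-- `u` is a nonzero complex multiple of `v`. -/
def PropNZ (u v : Vec4) : Prop := ∃ c : ℂ, c ≠ 0 ∧ u = c • v

/-- A loxodromic element of SU(3,1), equipped with its eigen-data. -/
structure Lox where
  M : Mat4
  hM : isSU31 M
  r : ℝ
  θ : ℝ
  φ : ℝ
  hr : 1 < r
  a : Vec4
  x : Vec4
  y : Vec4
  rp : Vec4
  hbasis : LinearIndependent ℂ ![a, x, y, rp]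
  ha : M.mulVec a = ((r : ℂ) * Complex.exp ((θ : ℂ) * Complex.I)) • a
  hx : M.mulVec x = Complex.exp ((φ : ℂ) * Complex.I) • x
  hy : M.mulVec y = Complex.exp (-(2*(θ : ℂ)+(φ : ℂ)) * Complex.I) • y
  hrp : M.mulVec rp = ((r : ℂ)⁻¹ * Complex.exp ((θ : ℂ) * Complex.I)) • rp
  hnull_a : hermForm a a = 0
  hnull_r : hermForm rp rp = 0
  hx1 : hermForm x x = 1
  hy1 : hermForm y y = 1

/-- Goldman's eta invariant `η(a,r;x)` for null `a`, `r` and positive `x`. -/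
def etaV (aA rA xB : Vec4) : ℂ :=
  (hermForm aA xB * hermForm xB rA) / (hermForm aA rA * hermForm xB xB)

def eta1 (A B : Lox) : ℂ := etaV A.a A.rp B.x
def eta2 (A B : Lox) : ℂ := etaV A.a A.rp B.y
def nu1 (A B : Lox) : ℂ := etaV B.a B.rp A.x
def nu2 (A B : Lox) : ℂ := etaV B.a B.rp A.y

def X1 (A B : Lox) : ℂ := crossRatio B.a A.a A.rp B.rp
def X2 (A B : Lox) : ℂ := crossRatio B.a A.rp A.a B.rp
def X3 (A B : Lox) : ℂ := crossRatio A.a A.rp B.a B.rp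

def alpha1 (A B : Lox) : ℂ := crossRatio A.rp A.a B.x B.a
def alpha2 (A B : Lox) : ℂ := crossRatio A.rp A.a B.y B.a
def beta1 (A B : Lox) : ℂ := crossRatio B.rp B.a A.x A.a
def beta2 (A B : Lox) : ℂ := crossRatio B.rp B.a A.y A.a

def etaIdx (i : Fin 2) (A B : Lox) : ℂ := if i = 0 then eta1 A B else eta2 A B
def nuIdx (j : Fin 2) (A B : Lox) : ℂ := if j = 0 then nu1 A B else nu2 A B
def alphaIdx (i : Fin 2) (A B : Lox) : ℂ := if i = 0 then alpha1 A B else alpha2 A B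
def betaIdx (j : Fin 2) (A B : Lox) : ℂ := if j = 0 then beta1 A B else beta2 A B

/-- Non-singularity of the eigen-data of a pair of loxodromic elements. -/
def NonSingularV (aA xA yA rA aB xB yB rB : Vec4) : Prop :=
  PairwiseNotProp4 aA rA aB rB ∧
  LinearIndependent ℂ ![aA, rA, aB, rB] ∧
  (etaV aA rA xB ≠ 0 ∨ etaV aA rA yB ≠ 0) ∧
  (etaV aB rB xA ≠ 0 ∨ etaV aB rB yA ≠ 0)

/-- The pair `(A,B)` of loxodromic elements is non-singular. -/
def NonSingular (A B : Lox) : Prop :=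
  NonSingularV A.a A.x A.y A.rp B.a B.x B.y B.rp

/-- trace. -/
def tau (A : Mat4) : ℂ := A.trace

/-- `σ_A = (tr(A)² − tr(A²))/2`. -/
def sigma (A : Mat4) : ℂ := ((A.trace)^2 - (A^2).trace)/2

/-- Cartan's angular invariant. -/
def cartan (z1 z2 z3 : Vec4) : ℝ :=
  Complex.arg (-(hermForm z1 z2 * hermForm z2 z3 * hermForm z3 z1))

/-- The diagonal matrix `E(κ,ψ)`. -/
def Emat (κ : ℂ) (ψ : ℝ) : Mat4 :=
  Matrix.diagonal
    ![Complex.exp κ,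
      Complex.exp (-((ψ : ℂ) * Complex.I) + (conj κ - κ)/2),
      Complex.exp ((ψ : ℂ) * Complex.I + (conj κ - κ)/2),
      Complex.exp (-(conj κ))]

/-- Anti-holomorphic isometric involution `z ↦ M·conj(z)` of `ℂ^{3,1}`. -/
def AntiHolInv (M : Mat4) : Prop :=
  M * (M.map (starRingEnd ℂ)) = 1 ∧
  ∀ z w : Vec4, hermForm (M.mulVec (star z)) (M.mulVec (star w)) = conj (hermForm z w)


lemma Hmat_mulVec (z : Vec4) : Hmat.mulVec z = ![z 3, z 1, z 2, z 0] := by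
  funext i
  fin_cases i <;>
    simp [Hmat, Matrix.mulVec, dotProduct, Fin.sum_univ_four]

set_option maxRecDepth 10000 in
lemma hermForm_eq_dot (z w : Vec4) : hermForm z w = star w ⬝ᵥ Hmat.mulVec z := by
  rw [Hmat_mulVec]
  simp only [dotProduct, Fin.sum_univ_four, Pi.star_apply, Matrix.cons_val_zero,
    Matrix.cons_val_one, Matrix.head_cons, Matrix.cons_val_two, Matrix.tail_cons,
    Matrix.cons_val_three]
  simp only [hermForm, starRingEnd_apply]
  ring

lemma hermForm_Q {Q : Mat4} (hQ : Qᴴ * Hmat * Q = Hmat) (z w : Vec4) :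
    hermForm (Q.mulVec z) (Q.mulVec w) = hermForm z w := by
  rw [hermForm_eq_dot, hermForm_eq_dot, Matrix.star_mulVec, Matrix.mulVec_mulVec,
    Matrix.dotProduct_mulVec, Matrix.vecMul_vecMul, ← Matrix.mul_assoc, hQ,
    Matrix.dotProduct_mulVec]

lemma herm_single3 (z : Vec4) : hermForm z (Pi.single 3 1) = z 0 := by
  simp [hermForm, Pi.single_apply]

lemma herm_single1r (z : Vec4) : hermForm z (Pi.single 1 1) = z 1 := by
  simp [hermForm, Pi.single_apply]

lemma herm_single2r (z : Vec4) : hermForm z (Pi.single 2 1) = z 2 := by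
  simp [hermForm, Pi.single_apply]

lemma herm_single1l (z : Vec4) : hermForm (Pi.single 1 1) z = conj (z 1) := by
  simp [hermForm, Pi.single_apply]

lemma herm_single2l (z : Vec4) : hermForm (Pi.single 2 1) z = conj (z 2) := by
  simp [hermForm, Pi.single_apply]

lemma offdiag_zero {x a b : ℂ} (h : x * a = b * x) (hne : b ≠ a) : x = 0 := by
  rcases mul_eq_zero.mp (show x * (a - b) = 0 by linear_combination h) with h'|h'
  · exact h'
  · exact absurd (sub_eq_zero.mp h').symm hne

lemma factor_zero {x a b : ℂ} (h : (a - b) * x = 0) (hx : x ≠ 0) : a = b :=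
  sub_eq_zero.mp ((mul_eq_zero.mp h).resolve_right hx)

lemma half_conj (lam : ℂ) : ((starRingEnd ℂ) lam - lam)/2 = -((lam.im:ℂ) * Complex.I) := by
  have h := Complex.sub_conj lam
  push_cast at h
  field_simp
  linear_combination -h

lemma exp_unit {z : ℂ} (h : (starRingEnd ℂ) z = -z) :
    Complex.exp z * (starRingEnd ℂ) (Complex.exp z) = 1 := by
  rw [← Complex.exp_conj, h, ← Complex.exp_add, add_neg_cancel, Complex.exp_zero]

lemma conj_neg_self1 (κ : ℂ) (ψ : ℝ) :
    (starRingEnd ℂ) (-((ψ : ℂ) * Complex.I) + ((starRingEnd ℂ) κ - κ)/2)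
      = -(-((ψ : ℂ) * Complex.I) + ((starRingEnd ℂ) κ - κ)/2) := by
  simp only [map_add, map_neg, _root_.map_mul, map_sub, map_div₀, Complex.conj_ofReal,
    Complex.conj_I, Complex.conj_conj, map_ofNat]
  ring

lemma conj_neg_self2 (κ : ℂ) (ψ : ℝ) :
    (starRingEnd ℂ) ((ψ : ℂ) * Complex.I + ((starRingEnd ℂ) κ - κ)/2)
      = -((ψ : ℂ) * Complex.I + ((starRingEnd ℂ) κ - κ)/2) := by
  simp only [map_add, map_neg, _root_.map_mul, map_sub, map_div₀, Complex.conj_ofReal,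
    Complex.conj_I, Complex.conj_conj, map_ofNat]
  ring

lemma exp_strip_inj {x y : ℂ} (hx1 : -Real.pi < x.im) (hx2 : x.im ≤ Real.pi)
    (hy1 : -Real.pi < y.im) (hy2 : y.im ≤ Real.pi)
    (h : Complex.exp x = Complex.exp y) : x = y := by
  obtain ⟨n, hn⟩ := Complex.exp_eq_exp_iff_exists_int.mp h
  have him : x.im = y.im + n * (2 * Real.pi) := by
    have := congrArg Complex.im hn
    simpa [Complex.add_im, Complex.mul_im, Complex.mul_re] using this
  have hpi := Real.pi_pos
  have habs : |(n:ℝ)| < 1 := by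
    rw [abs_lt]; constructor <;> nlinarith
  have : |n| < 1 := by exact_mod_cast (by rwa [← Int.cast_abs] at habs : ((|n|:ℤ):ℝ) < 1)
  have hn0 : n = 0 := Int.abs_lt_one_iff.mp this
  rw [hn0] at hn; simpa using hn

lemma stepA_alg (c cb p pb q qb g1 g1b g2 g2b g1' g1b' g2' g2b'
    m11 m11b m12 m12b m21 m21b m22 m22b : ℂ)
    (e1 : c * p * g1 = p * g1' * m11 + q * g2' * m21)
    (e1b : cb * pb * g1b = pb * g1b' * m11b + qb * g2b' * m21b)
    (e2 : c * q * g2 = p * g1' * m12 + q * g2' * m22)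
    (e2b : cb * qb * g2b = pb * g1b' * m12b + qb * g2b' * m22b)
    (u1 : g1 * g1b = 1) (u2 : g2 * g2b = 1)
    (u1' : g1' * g1b' = 1) (u2' : g2' * g2b' = 1)
    (r1 : m11 * m11b + m12 * m12b = 1)
    (r2 : m21 * m21b + m22 * m22b = 1)
    (r3 : m11 * m21b + m12 * m22b = 0)
    (r3b : m11b * m21 + m12b * m22 = 0) :
    (c * cb) * (p * pb + q * qb) = p * pb + q * qb := by
  have A1 : c * cb * (p * pb) = (p * g1' * m11 + q * g2' * m21) * (pb * g1b' * m11b + qb * g2b' * m21b) := by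
    calc c * cb * (p * pb) = (c * p * g1) * (cb * pb * g1b) := by
          linear_combination (-(c*cb*p*pb)) * u1
      _ = _ := by rw [e1, e1b]
  have A2 : c * cb * (q * qb) = (p * g1' * m12 + q * g2' * m22) * (pb * g1b' * m12b + qb * g2b' * m22b) := by
    calc c * cb * (q * qb) = (c * q * g2) * (cb * qb * g2b) := by
          linear_combination (-(c*cb*q*qb)) * u2
      _ = _ := by rw [e2, e2b]
  linear_combination A1 + A2 + (p*pb*g1'*g1b') * r1 + (q*qb*g2'*g2b') * r2
    + (p*qb*g1'*g2b') * r3 + (q*pb*g2'*g1b') * r3b + (p*pb) * u1' + (q*qb) * u2'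


lemma unitary2_rows (a b c d : ℂ)
    (h11 : (starRingEnd ℂ) a * a + (starRingEnd ℂ) c * c = 1)
    (h22 : (starRingEnd ℂ) b * b + (starRingEnd ℂ) d * d = 1)
    (h12 : (starRingEnd ℂ) a * b + (starRingEnd ℂ) c * d = 0) :
    (a * (starRingEnd ℂ) a + b * (starRingEnd ℂ) b = 1) ∧
    (c * (starRingEnd ℂ) c + d * (starRingEnd ℂ) d = 1) ∧
    (a * (starRingEnd ℂ) c + b * (starRingEnd ℂ) d = 0) := by
  have hct : (!![a, b; c, d] : Matrix (Fin 2) (Fin 2) ℂ)ᴴ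
      = !![(starRingEnd ℂ) a, (starRingEnd ℂ) c; (starRingEnd ℂ) b, (starRingEnd ℂ) d] := by
    ext i j
    fin_cases i <;> fin_cases j <;> simp [Matrix.conjTranspose_apply, Complex.star_def]
  have hN : (!![a, b; c, d] : Matrix (Fin 2) (Fin 2) ℂ) * (!![a, b; c, d])ᴴ = 1 := by
    apply mul_eq_one_comm.mp
    rw [hct, Matrix.mul_fin_two, Matrix.one_fin_two]
    ext i j
    fin_cases i <;> fin_cases j <;> simp
    · linear_combination h11
    · linear_combination h12
    · have h21 := congrArg (starRingEnd ℂ) h12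
      simp only [map_add, _root_.map_mul, Complex.conj_conj, map_zero] at h21
      linear_combination h21
    · linear_combination h22
  rw [hct, Matrix.mul_fin_two, Matrix.one_fin_two] at hN
  refine ⟨?_, ?_, ?_⟩
  · have h := congrFun (congrFun hN 0) 0; simpa using h
  · have h := congrFun (congrFun hN 1) 1; simpa using h
  · have h := congrFun (congrFun hN 0) 1; simpa using h

set_option maxHeartbeats 2000000 in
theorem forward_aux (C P : Mat4) (lam κ κ' : ℂ) (phi ψ ψ' : ℝ) (hlam : 0 < lam.re)
    (hκ : -Real.pi < κ.im ∧ κ.im ≤ Real.pi)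
    (hκ' : -Real.pi < κ'.im ∧ κ'.im ≤ Real.pi)
    (hψ : -Real.pi < ψ ∧ ψ ≤ Real.pi) (hψ' : -Real.pi < ψ' ∧ ψ' ≤ Real.pi)
    (hCE : C * Emat lam phi = Emat lam phi * C)
    (hMain : C * P * Emat κ ψ = P * Emat κ' ψ' * C)
    (hCsu : Cᴴ * Hmat * C = Hmat) (hPsu : Pᴴ * Hmat * P = Hmat) (hPdet : P.det = 1)
    (hEta : P 0 1 ≠ 0 ∨ P 0 2 ≠ 0)
    (hNu : (P 1 3 ≠ 0 ∧ P 1 0 ≠ 0) ∨ (P 2 3 ≠ 0 ∧ P 2 0 ≠ 0))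
    (hDet2 : P 1 0 * P 2 3 - P 1 3 * P 2 0 ≠ 0) :
    κ = κ' ∧ ψ = ψ' := by
  -- distinctness of the relevant diagonal entries of Emat lam phi
  have hre1 : (-((phi:ℂ) * Complex.I) + ((starRingEnd ℂ) lam - lam)/2).re = 0 := by
    rw [half_conj]; simp
  have hre2 : ((phi:ℂ) * Complex.I + ((starRingEnd ℂ) lam - lam)/2).re = 0 := by
    rw [half_conj]; simp
  have hre3 : (-((starRingEnd ℂ) lam)).re = -lam.re := by simp
  have hexpne : ∀ x y : ℂ, x.re ≠ y.re → Complex.exp x ≠ Complex.exp y := by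
    intro x y h hc
    exact h (Real.exp_injective (by rw [← Complex.norm_exp, ← Complex.norm_exp, hc]))
  have hne01 : Complex.exp lam ≠ Complex.exp (-((phi:ℂ) * Complex.I) + ((starRingEnd ℂ) lam - lam)/2) :=
    hexpne _ _ (by rw [hre1]; linarith)
  have hne02 : Complex.exp lam ≠ Complex.exp ((phi:ℂ) * Complex.I + ((starRingEnd ℂ) lam - lam)/2) :=
    hexpne _ _ (by rw [hre2]; linarith)
  have hne03 : Complex.exp lam ≠ Complex.exp (-((starRingEnd ℂ) lam)) :=
    hexpne _ _ (by rw [hre3]; linarith)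
  have hne31 : Complex.exp (-((starRingEnd ℂ) lam)) ≠ Complex.exp (-((phi:ℂ) * Complex.I) + ((starRingEnd ℂ) lam - lam)/2) :=
    hexpne _ _ (by rw [hre3, hre1]; linarith)
  have hne32 : Complex.exp (-((starRingEnd ℂ) lam)) ≠ Complex.exp ((phi:ℂ) * Complex.I + ((starRingEnd ℂ) lam - lam)/2) :=
    hexpne _ _ (by rw [hre3, hre2]; linarith)
  -- off-block entries of C vanish
  have hz : ∀ i j : Fin 4, (C * Emat lam phi) i j = (Emat lam phi * C) i j :=
    fun i j => congrFun (congrFun hCE i) j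
  have hC01 : C 0 1 = 0 := by
    have h := hz 0 1
    simp only [Emat, Matrix.mul_diagonal, Matrix.diagonal_mul, Matrix.cons_val_zero,
      Matrix.cons_val_one, Matrix.head_cons, Matrix.cons_val_two, Matrix.tail_cons,
      Matrix.cons_val_three] at h
    exact offdiag_zero h hne01
  have hC02 : C 0 2 = 0 := by
    have h := hz 0 2
    simp only [Emat, Matrix.mul_diagonal, Matrix.diagonal_mul, Matrix.cons_val_zero,
      Matrix.cons_val_one, Matrix.head_cons, Matrix.cons_val_two, Matrix.tail_cons,
      Matrix.cons_val_three] at h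
    exact offdiag_zero h hne02
  have hC03 : C 0 3 = 0 := by
    have h := hz 0 3
    simp only [Emat, Matrix.mul_diagonal, Matrix.diagonal_mul, Matrix.cons_val_zero,
      Matrix.cons_val_one, Matrix.head_cons, Matrix.cons_val_two, Matrix.tail_cons,
      Matrix.cons_val_three] at h
    exact offdiag_zero h hne03
  have hC10 : C 1 0 = 0 := by
    have h := hz 1 0
    simp only [Emat, Matrix.mul_diagonal, Matrix.diagonal_mul, Matrix.cons_val_zero,
      Matrix.cons_val_one, Matrix.head_cons, Matrix.cons_val_two, Matrix.tail_cons,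
      Matrix.cons_val_three] at h
    exact offdiag_zero h hne01.symm
  have hC20 : C 2 0 = 0 := by
    have h := hz 2 0
    simp only [Emat, Matrix.mul_diagonal, Matrix.diagonal_mul, Matrix.cons_val_zero,
      Matrix.cons_val_one, Matrix.head_cons, Matrix.cons_val_two, Matrix.tail_cons,
      Matrix.cons_val_three] at h
    exact offdiag_zero h hne02.symm
  have hC30 : C 3 0 = 0 := by
    have h := hz 3 0
    simp only [Emat, Matrix.mul_diagonal, Matrix.diagonal_mul, Matrix.cons_val_zero,
      Matrix.cons_val_one, Matrix.head_cons, Matrix.cons_val_two, Matrix.tail_cons,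
      Matrix.cons_val_three] at h
    exact offdiag_zero h hne03.symm
  have hC13 : C 1 3 = 0 := by
    have h := hz 1 3
    simp only [Emat, Matrix.mul_diagonal, Matrix.diagonal_mul, Matrix.cons_val_zero,
      Matrix.cons_val_one, Matrix.head_cons, Matrix.cons_val_two, Matrix.tail_cons,
      Matrix.cons_val_three] at h
    exact offdiag_zero h hne31.symm
  have hC23 : C 2 3 = 0 := by
    have h := hz 2 3
    simp only [Emat, Matrix.mul_diagonal, Matrix.diagonal_mul, Matrix.cons_val_zero,
      Matrix.cons_val_one, Matrix.head_cons, Matrix.cons_val_two, Matrix.tail_cons,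
      Matrix.cons_val_three] at h
    exact offdiag_zero h hne32.symm
  have hC31 : C 3 1 = 0 := by
    have h := hz 3 1
    simp only [Emat, Matrix.mul_diagonal, Matrix.diagonal_mul, Matrix.cons_val_zero,
      Matrix.cons_val_one, Matrix.head_cons, Matrix.cons_val_two, Matrix.tail_cons,
      Matrix.cons_val_three] at h
    exact offdiag_zero h hne31
  have hC32 : C 3 2 = 0 := by
    have h := hz 3 2
    simp only [Emat, Matrix.mul_diagonal, Matrix.diagonal_mul, Matrix.cons_val_zero,
      Matrix.cons_val_one, Matrix.head_cons, Matrix.cons_val_two, Matrix.tail_cons,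
      Matrix.cons_val_three] at h
    exact offdiag_zero h hne32
  -- relations from C in SU(3,1)
  have hzs : ∀ i j : Fin 4, (Cᴴ * Hmat * C) i j = Hmat i j := fun i j => congrFun (congrFun hCsu i) j
  have h03' := hzs 0 3
  simp only [Matrix.mul_apply, Fin.sum_univ_four, Matrix.conjTranspose_apply, Hmat,
      Complex.star_def, hC01, hC02, hC03, hC10, hC20, hC30, hC13, hC23, hC31, hC32,
      map_zero, zero_mul, mul_zero, add_zero, zero_add, Matrix.cons_val', Matrix.cons_val_zero,
      Matrix.cons_val_one, Matrix.head_cons, Matrix.cons_val_two, Matrix.tail_cons,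
      Matrix.cons_val_three, Matrix.empty_val', Matrix.cons_val_fin_one, Matrix.head_fin_const,
      one_mul, Matrix.of_apply] at h03'
  have hcc' : (starRingEnd ℂ) (C 0 0) * C 3 3 = 1 := by linear_combination h03'
  have h11' := hzs 1 1
  simp only [Matrix.mul_apply, Fin.sum_univ_four, Matrix.conjTranspose_apply, Hmat,
      Complex.star_def, hC01, hC02, hC03, hC10, hC20, hC30, hC13, hC23, hC31, hC32,
      map_zero, zero_mul, mul_zero, add_zero, zero_add, Matrix.cons_val', Matrix.cons_val_zero,
      Matrix.cons_val_one, Matrix.head_cons, Matrix.cons_val_two, Matrix.tail_cons,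
      Matrix.cons_val_three, Matrix.empty_val', Matrix.cons_val_fin_one, Matrix.head_fin_const,
      one_mul, Matrix.of_apply] at h11'
  have h22' := hzs 2 2
  simp only [Matrix.mul_apply, Fin.sum_univ_four, Matrix.conjTranspose_apply, Hmat,
      Complex.star_def, hC01, hC02, hC03, hC10, hC20, hC30, hC13, hC23, hC31, hC32,
      map_zero, zero_mul, mul_zero, add_zero, zero_add, Matrix.cons_val', Matrix.cons_val_zero,
      Matrix.cons_val_one, Matrix.head_cons, Matrix.cons_val_two, Matrix.tail_cons,
      Matrix.cons_val_three, Matrix.empty_val', Matrix.cons_val_fin_one, Matrix.head_fin_const,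
      one_mul, Matrix.of_apply] at h22'
  have h12' := hzs 1 2
  simp only [Matrix.mul_apply, Fin.sum_univ_four, Matrix.conjTranspose_apply, Hmat,
      Complex.star_def, hC01, hC02, hC03, hC10, hC20, hC30, hC13, hC23, hC31, hC32,
      map_zero, zero_mul, mul_zero, add_zero, zero_add, Matrix.cons_val', Matrix.cons_val_zero,
      Matrix.cons_val_one, Matrix.head_cons, Matrix.cons_val_two, Matrix.tail_cons,
      Matrix.cons_val_three, Matrix.empty_val', Matrix.cons_val_fin_one, Matrix.head_fin_const,
      one_mul, Matrix.of_apply] at h12'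
  obtain ⟨hr1, hr2, hr3⟩ := unitary2_rows (C 1 1) (C 1 2) (C 2 1) (C 2 2)
    (by linear_combination h11') (by linear_combination h22') (by linear_combination h12')
  have hr3b : (starRingEnd ℂ) (C 1 1) * C 2 1 + (starRingEnd ℂ) (C 1 2) * C 2 2 = 0 := by
    have h := congrArg (starRingEnd ℂ) hr3
    simp only [map_add, _root_.map_mul, Complex.conj_conj, map_zero] at h
    linear_combination h
  have hP00 : (starRingEnd ℂ) (P 0 0) * P 3 0 + (starRingEnd ℂ) (P 1 0) * P 1 0
      + (starRingEnd ℂ) (P 2 0) * P 2 0 + (starRingEnd ℂ) (P 3 0) * P 0 0 = 0 := by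
    have h := congrFun (congrFun hPsu 0) 0
    simp only [Matrix.mul_apply, Fin.sum_univ_four, Matrix.conjTranspose_apply, Hmat,
      Complex.star_def, map_zero, zero_mul, mul_zero, add_zero, zero_add, Matrix.cons_val',
      Matrix.cons_val_zero, Matrix.cons_val_one, Matrix.head_cons, Matrix.cons_val_two,
      Matrix.tail_cons, Matrix.cons_val_three, Matrix.empty_val', Matrix.cons_val_fin_one,
      Matrix.head_fin_const, one_mul, Matrix.of_apply] at h
    linear_combination h
  have hzm : ∀ i j : Fin 4, (C * P * Emat κ ψ) i j = (P * Emat κ' ψ' * C) i j :=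
    fun i j => congrFun (congrFun hMain i) j
  have E00 := hzm 0 0
  simp only [Emat, Matrix.mul_apply, Matrix.diagonal_apply_eq, Matrix.diagonal_apply_ne,
      ne_eq, Fin.sum_univ_four, one_ne_zero, Fin.reduceEq, not_false_eq_true,
      hC01, hC02, hC03, hC10, hC20, hC30, hC13, hC23, hC31, hC32,
      zero_mul, mul_zero, add_zero, zero_add, Matrix.cons_val_zero,
      Matrix.cons_val_one, Matrix.head_cons, Matrix.cons_val_two, Matrix.tail_cons,
      Matrix.cons_val_three] at E00
  have E30 := hzm 3 0
  simp only [Emat, Matrix.mul_apply, Matrix.diagonal_apply_eq, Matrix.diagonal_apply_ne,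
      ne_eq, Fin.sum_univ_four, one_ne_zero, Fin.reduceEq, not_false_eq_true,
      hC01, hC02, hC03, hC10, hC20, hC30, hC13, hC23, hC31, hC32,
      zero_mul, mul_zero, add_zero, zero_add, Matrix.cons_val_zero,
      Matrix.cons_val_one, Matrix.head_cons, Matrix.cons_val_two, Matrix.tail_cons,
      Matrix.cons_val_three] at E30
  have E10 := hzm 1 0
  simp only [Emat, Matrix.mul_apply, Matrix.diagonal_apply_eq, Matrix.diagonal_apply_ne,
      ne_eq, Fin.sum_univ_four, one_ne_zero, Fin.reduceEq, not_false_eq_true,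
      hC01, hC02, hC03, hC10, hC20, hC30, hC13, hC23, hC31, hC32,
      zero_mul, mul_zero, add_zero, zero_add, Matrix.cons_val_zero,
      Matrix.cons_val_one, Matrix.head_cons, Matrix.cons_val_two, Matrix.tail_cons,
      Matrix.cons_val_three] at E10
  have E20 := hzm 2 0
  simp only [Emat, Matrix.mul_apply, Matrix.diagonal_apply_eq, Matrix.diagonal_apply_ne,
      ne_eq, Fin.sum_univ_four, one_ne_zero, Fin.reduceEq, not_false_eq_true,
      hC01, hC02, hC03, hC10, hC20, hC30, hC13, hC23, hC31, hC32,
      zero_mul, mul_zero, add_zero, zero_add, Matrix.cons_val_zero,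
      Matrix.cons_val_one, Matrix.head_cons, Matrix.cons_val_two, Matrix.tail_cons,
      Matrix.cons_val_three] at E20
  have E13 := hzm 1 3
  simp only [Emat, Matrix.mul_apply, Matrix.diagonal_apply_eq, Matrix.diagonal_apply_ne,
      ne_eq, Fin.sum_univ_four, one_ne_zero, Fin.reduceEq, not_false_eq_true,
      hC01, hC02, hC03, hC10, hC20, hC30, hC13, hC23, hC31, hC32,
      zero_mul, mul_zero, add_zero, zero_add, Matrix.cons_val_zero,
      Matrix.cons_val_one, Matrix.head_cons, Matrix.cons_val_two, Matrix.tail_cons,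
      Matrix.cons_val_three] at E13
  have E23 := hzm 2 3
  simp only [Emat, Matrix.mul_apply, Matrix.diagonal_apply_eq, Matrix.diagonal_apply_ne,
      ne_eq, Fin.sum_univ_four, one_ne_zero, Fin.reduceEq, not_false_eq_true,
      hC01, hC02, hC03, hC10, hC20, hC30, hC13, hC23, hC31, hC32,
      zero_mul, mul_zero, add_zero, zero_add, Matrix.cons_val_zero,
      Matrix.cons_val_one, Matrix.head_cons, Matrix.cons_val_two, Matrix.tail_cons,
      Matrix.cons_val_three] at E23
  have E01 := hzm 0 1
  simp only [Emat, Matrix.mul_apply, Matrix.diagonal_apply_eq, Matrix.diagonal_apply_ne,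
      ne_eq, Fin.sum_univ_four, one_ne_zero, Fin.reduceEq, not_false_eq_true,
      hC01, hC02, hC03, hC10, hC20, hC30, hC13, hC23, hC31, hC32,
      zero_mul, mul_zero, add_zero, zero_add, Matrix.cons_val_zero,
      Matrix.cons_val_one, Matrix.head_cons, Matrix.cons_val_two, Matrix.tail_cons,
      Matrix.cons_val_three] at E01
  have E02 := hzm 0 2
  simp only [Emat, Matrix.mul_apply, Matrix.diagonal_apply_eq, Matrix.diagonal_apply_ne,
      ne_eq, Fin.sum_univ_four, one_ne_zero, Fin.reduceEq, not_false_eq_true,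
      hC01, hC02, hC03, hC10, hC20, hC30, hC13, hC23, hC31, hC32,
      zero_mul, mul_zero, add_zero, zero_add, Matrix.cons_val_zero,
      Matrix.cons_val_one, Matrix.head_cons, Matrix.cons_val_two, Matrix.tail_cons,
      Matrix.cons_val_three] at E02
  -- unit modulus facts
  have hu1 := exp_unit (conj_neg_self1 κ ψ)
  have hu2 := exp_unit (conj_neg_self2 κ ψ)
  have hu1' := exp_unit (conj_neg_self1 κ' ψ')
  have hu2' := exp_unit (conj_neg_self2 κ' ψ')
  -- Step A : c * conj c = 1
  have E01c := congrArg (starRingEnd ℂ) E01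
  simp only [map_add, _root_.map_mul] at E01c
  have E02c := congrArg (starRingEnd ℂ) E02
  simp only [map_add, _root_.map_mul] at E02c
  have hA := stepA_alg (C 0 0) ((starRingEnd ℂ) (C 0 0)) (P 0 1) ((starRingEnd ℂ) (P 0 1))
    (P 0 2) ((starRingEnd ℂ) (P 0 2))
    (Complex.exp (-((ψ:ℂ) * Complex.I) + ((starRingEnd ℂ) κ - κ)/2))
    ((starRingEnd ℂ) (Complex.exp (-((ψ:ℂ) * Complex.I) + ((starRingEnd ℂ) κ - κ)/2)))
    (Complex.exp ((ψ:ℂ) * Complex.I + ((starRingEnd ℂ) κ - κ)/2))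
    ((starRingEnd ℂ) (Complex.exp ((ψ:ℂ) * Complex.I + ((starRingEnd ℂ) κ - κ)/2)))
    (Complex.exp (-((ψ':ℂ) * Complex.I) + ((starRingEnd ℂ) κ' - κ')/2))
    ((starRingEnd ℂ) (Complex.exp (-((ψ':ℂ) * Complex.I) + ((starRingEnd ℂ) κ' - κ')/2)))
    (Complex.exp ((ψ':ℂ) * Complex.I + ((starRingEnd ℂ) κ' - κ')/2))
    ((starRingEnd ℂ) (Complex.exp ((ψ':ℂ) * Complex.I + ((starRingEnd ℂ) κ' - κ')/2)))
    (C 1 1) ((starRingEnd ℂ) (C 1 1)) (C 1 2) ((starRingEnd ℂ) (C 1 2))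
    (C 2 1) ((starRingEnd ℂ) (C 2 1)) (C 2 2) ((starRingEnd ℂ) (C 2 2))
    (by linear_combination E01) (by linear_combination E01c)
    (by linear_combination E02) (by linear_combination E02c)
    hu1 hu2 hu1' hu2' hr1 hr2 hr3 hr3b
  have ht : P 0 1 * (starRingEnd ℂ) (P 0 1) + P 0 2 * (starRingEnd ℂ) (P 0 2) ≠ 0 := by
    rw [Complex.mul_conj, Complex.mul_conj, ← Complex.ofReal_add, Ne, Complex.ofReal_eq_zero]
    rcases hEta with h|h
    · have := Complex.normSq_pos.mpr h
      nlinarith [Complex.normSq_nonneg (P 0 2)]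
    · have := Complex.normSq_pos.mpr h
      nlinarith [Complex.normSq_nonneg (P 0 1)]
  have hcu : C 0 0 * (starRingEnd ℂ) (C 0 0) = 1 := by
    apply mul_right_cancel₀ ht
    rw [hA, one_mul]
  have hcne : C 0 0 ≠ 0 := fun h => by
    rw [h, zero_mul] at hcu; exact one_ne_zero hcu.symm
  have hcbne : (starRingEnd ℂ) (C 0 0) ≠ 0 := fun h => by
    rw [h, mul_zero] at hcu; exact one_ne_zero hcu.symm
  have hc3 : C 3 3 = C 0 0 := by
    apply mul_left_cancel₀ hcbne
    rw [hcc']; linear_combination -hcu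
  -- a corner entry of the first column of P is nonzero
  have hcorner : P 0 0 ≠ 0 ∨ P 3 0 ≠ 0 := by
    rw [← not_and_or]
    rintro ⟨h0, h3⟩
    rw [h0, h3] at hP00
    simp only [map_zero, zero_mul, mul_zero, add_zero, zero_add] at hP00
    have hnum : Complex.normSq (P 1 0) + Complex.normSq (P 2 0) = 0 := by
      have h : ((Complex.normSq (P 1 0) : ℂ)) + (Complex.normSq (P 2 0) : ℂ) = 0 := by
        rw [Complex.normSq_eq_conj_mul_self, Complex.normSq_eq_conj_mul_self]
        linear_combination hP00
      exact_mod_cast h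
    have h1 : P 1 0 = 0 := Complex.normSq_eq_zero.mp
      (le_antisymm (by nlinarith [Complex.normSq_nonneg (P 2 0)]) (Complex.normSq_nonneg _))
    have h2 : P 2 0 = 0 := Complex.normSq_eq_zero.mp
      (le_antisymm (by nlinarith [Complex.normSq_nonneg (P 1 0)]) (Complex.normSq_nonneg _))
    have hdet0 : P.det = 0 := Matrix.det_eq_zero_of_column_eq_zero 0
      (fun i => by fin_cases i <;> assumption)
    rw [hPdet] at hdet0
    exact (one_ne_zero (α := ℂ)) hdet0
  -- κ = κ'
  have hg0 : Complex.exp κ = Complex.exp κ' := by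
    rcases hcorner with h|h
    · exact factor_zero
        (show (Complex.exp κ - Complex.exp κ') * (C 0 0 * P 0 0) = 0 by linear_combination E00)
        (mul_ne_zero hcne h)
    · rw [hc3] at E30
      exact factor_zero
        (show (Complex.exp κ - Complex.exp κ') * (C 0 0 * P 3 0) = 0 by linear_combination E30)
        (mul_ne_zero hcne h)
  have hκeq : κ = κ' := exp_strip_inj hκ.1 hκ.2 hκ'.1 hκ'.2 hg0
  subst hκeq
  refine ⟨rfl, ?_⟩
  -- middle block is scalar
  rw [hc3] at E13 E23
  have f10 : C 1 1 * P 1 0 + C 1 2 * P 2 0 = C 0 0 * P 1 0 := by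
    have h : (C 1 1 * P 1 0 + C 1 2 * P 2 0 - C 0 0 * P 1 0) * Complex.exp κ = 0 := by
      linear_combination E10
    have := (mul_eq_zero.mp h).resolve_right (Complex.exp_ne_zero κ)
    linear_combination this
  have f20 : C 2 1 * P 1 0 + C 2 2 * P 2 0 = C 0 0 * P 2 0 := by
    have h : (C 2 1 * P 1 0 + C 2 2 * P 2 0 - C 0 0 * P 2 0) * Complex.exp κ = 0 := by
      linear_combination E20
    have := (mul_eq_zero.mp h).resolve_right (Complex.exp_ne_zero κ)
    linear_combination this
  have f13 : C 1 1 * P 1 3 + C 1 2 * P 2 3 = C 0 0 * P 1 3 := by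
    have h : (C 1 1 * P 1 3 + C 1 2 * P 2 3 - C 0 0 * P 1 3) *
        Complex.exp (-((starRingEnd ℂ) κ)) = 0 := by
      linear_combination E13
    have := (mul_eq_zero.mp h).resolve_right (Complex.exp_ne_zero _)
    linear_combination this
  have f23 : C 2 1 * P 1 3 + C 2 2 * P 2 3 = C 0 0 * P 2 3 := by
    have h : (C 2 1 * P 1 3 + C 2 2 * P 2 3 - C 0 0 * P 2 3) *
        Complex.exp (-((starRingEnd ℂ) κ)) = 0 := by
      linear_combination E23
    have := (mul_eq_zero.mp h).resolve_right (Complex.exp_ne_zero _)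
    linear_combination this
  have hm11 : C 1 1 = C 0 0 := factor_zero
    (show (C 1 1 - C 0 0) * (P 1 0 * P 2 3 - P 1 3 * P 2 0) = 0 by
      linear_combination P 2 3 * f10 - P 2 0 * f13) hDet2
  have hm12 : C 1 2 = 0 := by
    have h : C 1 2 * (P 1 0 * P 2 3 - P 1 3 * P 2 0) = 0 := by
      linear_combination P 1 0 * f13 - P 1 3 * f10
    exact (mul_eq_zero.mp h).resolve_right hDet2
  have hm21 : C 2 1 = 0 := by
    have h : C 2 1 * (P 1 0 * P 2 3 - P 1 3 * P 2 0) = 0 := by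
      linear_combination P 2 3 * f20 - P 2 0 * f23
    exact (mul_eq_zero.mp h).resolve_right hDet2
  have hm22 : C 2 2 = C 0 0 := factor_zero
    (show (C 2 2 - C 0 0) * (P 1 0 * P 2 3 - P 1 3 * P 2 0) = 0 by
      linear_combination P 1 0 * f23 - P 1 3 * f20) hDet2
  -- conclude ψ = ψ'
  have him : ∀ r : ℝ, ((r:ℂ) * Complex.I).im = r := fun r => by simp
  have hee : Complex.exp ((ψ:ℂ) * Complex.I) = Complex.exp ((ψ':ℂ) * Complex.I) := by
    rcases hEta with h|h
    · rw [hm11, hm21] at E01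
      have hg1 := factor_zero
        (show (Complex.exp (-((ψ:ℂ) * Complex.I) + ((starRingEnd ℂ) κ - κ)/2)
            - Complex.exp (-((ψ':ℂ) * Complex.I) + ((starRingEnd ℂ) κ - κ)/2))
            * (C 0 0 * P 0 1) = 0 by linear_combination E01)
        (mul_ne_zero hcne h)
      rw [Complex.exp_add, Complex.exp_add] at hg1
      have h2 := mul_right_cancel₀ (Complex.exp_ne_zero _) hg1
      rw [Complex.exp_neg, Complex.exp_neg] at h2
      exact inv_injective h2
    · rw [hm12, hm22] at E02
      have hg2 := factor_zero
        (show (Complex.exp ((ψ:ℂ) * Complex.I + ((starRingEnd ℂ) κ - κ)/2)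
            - Complex.exp ((ψ':ℂ) * Complex.I + ((starRingEnd ℂ) κ - κ)/2))
            * (C 0 0 * P 0 2) = 0 by linear_combination E02)
        (mul_ne_zero hcne h)
      rw [Complex.exp_add, Complex.exp_add] at hg2
      exact mul_right_cancel₀ (Complex.exp_ne_zero _) hg2
  have hIψ := exp_strip_inj (x := (ψ:ℂ) * Complex.I) (y := (ψ':ℂ) * Complex.I)
    (by rw [him]; exact hψ.1) (by rw [him]; exact hψ.2)
    (by rw [him]; exact hψ'.1) (by rw [him]; exact hψ'.2) hee
  have := mul_right_cancel₀ Complex.I_ne_zero hIψ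
  exact_mod_cast this


/-- closing a handle: `⟨A, BK⟩` is conjugate to `⟨A, BK'⟩` by an
element commuting with `A` iff the twist-bend parameters agree. -/
theorem closing_handle_twist_bend (Q : Mat4) (hQ : isSU31 Q)
    (lam : ℂ) (hlam : 0 < lam.re) (phi : ℝ)
    (A : Mat4) (hA : A = Q * Emat lam phi * Q⁻¹)
    (aA xA yA rA : Vec4)
    (haA : aA = Q.mulVec (Pi.single 0 1)) (hxA : xA = Q.mulVec (Pi.single 1 1))
    (hyA : yA = Q.mulVec (Pi.single 2 1)) (hrA : rA = Q.mulVec (Pi.single 3 1))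
    (B : Mat4) (hB : isSU31 B)
    (hns : NonSingularV aA xA yA rA
      (B.mulVec rA) (B.mulVec xA) (B.mulVec yA) (B.mulVec aA))
    (κ κ' : ℂ) (hκ : -Real.pi < κ.im ∧ κ.im ≤ Real.pi)
    (hκ' : -Real.pi < κ'.im ∧ κ'.im ≤ Real.pi)
    (ψ ψ' : ℝ) (hψ : -Real.pi < ψ ∧ ψ ≤ Real.pi) (hψ' : -Real.pi < ψ' ∧ ψ' ≤ Real.pi)
    (K K' : Mat4) (hK : K = Q * Emat κ ψ * Q⁻¹) (hK' : K' = Q * Emat κ' ψ' * Q⁻¹) :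
    (∃ D : Mat4, isSU31 D ∧ D * A * D⁻¹ = A ∧ D * (B * K) * D⁻¹ = B * K') ↔
      (κ = κ' ∧ ψ = ψ') := by
  constructor
  · rintro ⟨D, hDsu, hDA, hDK⟩
    subst hA hK hK' haA hxA hyA hrA
    have hQl : Q⁻¹ * Q = 1 := Matrix.nonsing_inv_mul Q (by simp [hQ.2])
    have hQr : Q * Q⁻¹ = 1 := Matrix.mul_nonsing_inv Q (by simp [hQ.2])
    have hDl : D⁻¹ * D = 1 := Matrix.nonsing_inv_mul D (by simp [hDsu.2])
    have key : ∀ X Y : Mat4, (Q⁻¹ * X * Q) * (Q⁻¹ * Y * Q) = Q⁻¹ * (X * Y) * Q := by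
      intro X Y
      have h1 : Q * (Q⁻¹ * Y * Q) = Y * Q := by
        rw [← Matrix.mul_assoc, ← Matrix.mul_assoc, hQr, Matrix.one_mul]
      calc (Q⁻¹ * X * Q) * (Q⁻¹ * Y * Q) = (Q⁻¹ * X) * (Q * (Q⁻¹ * Y * Q)) := by
            rw [Matrix.mul_assoc]
        _ = (Q⁻¹ * X) * (Y * Q) := by rw [h1]
        _ = Q⁻¹ * (X * Y) * Q := by simp [Matrix.mul_assoc]
    have unconj : ∀ X : Mat4, Q⁻¹ * (Q * X * Q⁻¹) * Q = X := by
      intro X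
      rw [Matrix.mul_assoc, Matrix.mul_assoc, hQl, Matrix.mul_one, ← Matrix.mul_assoc,
        hQl, Matrix.one_mul]
    have mulright : ∀ X Y Z : Mat4, X * Y * X⁻¹ = Z → X⁻¹ * X = 1 → X * Y = Z * X := by
      intro X Y Z h hX
      have h2 := congrArg (fun W => W * X) h
      simp only [Matrix.mul_assoc, hX, Matrix.mul_one] at h2
      simpa [Matrix.mul_assoc] using h2
    have hCE : (Q⁻¹*D*Q) * Emat lam phi = Emat lam phi * (Q⁻¹*D*Q) := by
      rw [← unconj (Emat lam phi), key, mulright D _ _ hDA hDl, ← key, unconj]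
    have hMain : (Q⁻¹*D*Q) * (Q⁻¹*B*Q) * Emat κ ψ = (Q⁻¹*B*Q) * Emat κ' ψ' * (Q⁻¹*D*Q) := by
      have hDBK : D * (B * (Q * Emat κ ψ * Q⁻¹)) = (B * (Q * Emat κ' ψ' * Q⁻¹)) * D :=
        mulright D _ _ hDK hDl
      calc (Q⁻¹*D*Q) * (Q⁻¹*B*Q) * Emat κ ψ
          = (Q⁻¹ * (D * B) * Q) * (Q⁻¹ * (Q * Emat κ ψ * Q⁻¹) * Q) := by
            rw [key, unconj]
        _ = Q⁻¹ * (D * (B * (Q * Emat κ ψ * Q⁻¹))) * Q := by rw [key]; simp [Matrix.mul_assoc]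
        _ = Q⁻¹ * ((B * (Q * Emat κ' ψ' * Q⁻¹)) * D) * Q := by rw [hDBK]
        _ = (Q⁻¹*B*Q) * Emat κ' ψ' * (Q⁻¹*D*Q) := by
            rw [← key, ← key, unconj]
    have hQinvH : (Q⁻¹)ᴴ * Hmat * Q⁻¹ = Hmat := by
      calc (Q⁻¹)ᴴ * Hmat * Q⁻¹ = (Q⁻¹)ᴴ * (Qᴴ * Hmat * Q) * Q⁻¹ := by rw [hQ.1]
        _ = ((Q⁻¹)ᴴ * Qᴴ) * Hmat * (Q * Q⁻¹) := by simp [Matrix.mul_assoc]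
        _ = Hmat := by rw [← Matrix.conjTranspose_mul, hQr, Matrix.conjTranspose_one,
              Matrix.one_mul, Matrix.mul_one]
    have hsu : ∀ X : Mat4, Xᴴ * Hmat * X = Hmat →
        (Q⁻¹ * X * Q)ᴴ * Hmat * (Q⁻¹ * X * Q) = Hmat := by
      intro X hX
      calc (Q⁻¹ * X * Q)ᴴ * Hmat * (Q⁻¹ * X * Q)
          = Qᴴ * (Xᴴ * ((Q⁻¹)ᴴ * Hmat * Q⁻¹) * X) * Q := by
            simp only [Matrix.conjTranspose_mul, Matrix.mul_assoc]
        _ = Qᴴ * (Xᴴ * (Hmat * X)) * Q := by rw [hQinvH]; simp [Matrix.mul_assoc]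
        _ = Hmat := by rw [← Matrix.mul_assoc Xᴴ, hX]; exact hQ.1
    have hPdet : (Q⁻¹*B*Q).det = 1 := by
      simp [Matrix.det_mul, hB.2, hQ.2, Matrix.det_nonsing_inv]
    have hBQv : ∀ v : Vec4, B.mulVec (Q.mulVec v) = Q.mulVec ((Q⁻¹*B*Q).mulVec v) := by
      intro v
      have hm : B * Q = Q * (Q⁻¹ * B * Q) := by
        calc B * Q = (Q * Q⁻¹) * B * Q := by rw [hQr, Matrix.one_mul]
          _ = Q * (Q⁻¹ * B * Q) := by simp [Matrix.mul_assoc]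
      rw [Matrix.mulVec_mulVec, Matrix.mulVec_mulVec, hm]
    have hEta : (Q⁻¹*B*Q) 0 1 ≠ 0 ∨ (Q⁻¹*B*Q) 0 2 ≠ 0 := by
      rcases hns.2.2.1 with h|h
      · left
        intro h0
        apply h
        unfold etaV
        rw [hBQv, hermForm_Q hQ.1, hermForm_Q hQ.1, herm_single3]
        simp [Matrix.mulVec_single, h0]
      · right
        intro h0
        apply h
        unfold etaV
        rw [hBQv, hermForm_Q hQ.1, hermForm_Q hQ.1, herm_single3]
        simp [Matrix.mulVec_single, h0]
    have hNu : ((Q⁻¹*B*Q) 1 3 ≠ 0 ∧ (Q⁻¹*B*Q) 1 0 ≠ 0) ∨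
        ((Q⁻¹*B*Q) 2 3 ≠ 0 ∧ (Q⁻¹*B*Q) 2 0 ≠ 0) := by
      rcases hns.2.2.2 with h|h
      · left
        constructor
        · intro h0
          apply h
          unfold etaV
          rw [hBQv, hBQv, hermForm_Q hQ.1, herm_single1r]
          simp [Matrix.mulVec_single, h0]
        · intro h0
          apply h
          unfold etaV
          rw [hBQv, hBQv, hermForm_Q hQ.1, hermForm_Q hQ.1, herm_single1l]
          simp [Matrix.mulVec_single, h0]
      · right
        constructor
        · intro h0
          apply h
          unfold etaV
          rw [hBQv, hBQv, hermForm_Q hQ.1, herm_single2r]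
          simp [Matrix.mulVec_single, h0]
        · intro h0
          apply h
          unfold etaV
          rw [hBQv, hBQv, hermForm_Q hQ.1, hermForm_Q hQ.1, herm_single2l]
          simp [Matrix.mulVec_single, h0]
    have hlin := hns.2.1
    simp only [hBQv] at hlin
    have hDet2 : (Q⁻¹*B*Q) 1 0 * (Q⁻¹*B*Q) 2 3 - (Q⁻¹*B*Q) 1 3 * (Q⁻¹*B*Q) 2 0 ≠ 0 := by
      set P : Mat4 := Q⁻¹*B*Q with hPdef
      intro hd0
      obtain ⟨α, β, hα, hm1, hm2⟩ : ∃ α β : ℂ, α ≠ 0 ∧ α * P 1 0 + β * P 1 3 = 0 ∧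
          α * P 2 0 + β * P 2 3 = 0 := by
        rcases hNu with ⟨h13, h10⟩|⟨h23, h20⟩
        · exact ⟨P 1 3, -(P 1 0), h13, by ring, by linear_combination -hd0⟩
        · exact ⟨P 2 3, -(P 2 0), h23, by linear_combination hd0, by ring⟩
      have hu : (-(α * P 0 0 + β * P 0 3)) • (Pi.single 0 1 : Vec4)
          + (-(α * P 3 0 + β * P 3 3)) • (Pi.single 3 1 : Vec4)
          + β • (P.mulVec (Pi.single 3 1)) + α • (P.mulVec (Pi.single 0 1)) = 0 := by
        funext j
        fin_cases j <;> simp [Matrix.mulVec_single, Pi.single_apply]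
        · linear_combination hm1
        · linear_combination hm2
      have hsumv : (-(α * P 0 0 + β * P 0 3)) • Q.mulVec (Pi.single 0 1)
          + (-(α * P 3 0 + β * P 3 3)) • Q.mulVec (Pi.single 3 1)
          + β • Q.mulVec (P.mulVec (Pi.single 3 1))
          + α • Q.mulVec (P.mulVec (Pi.single 0 1)) = 0 := by
        have h2 := congrArg (fun v => Q.mulVec v) hu
        simpa only [Matrix.mulVec_add, Matrix.mulVec_smul, Matrix.mulVec_zero] using h2
      have hli := Fintype.linearIndependent_iff.mp hlin
        ![-(α * P 0 0 + β * P 0 3), -(α * P 3 0 + β * P 3 3), β, α]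
      have hsum' : ∑ i : Fin 4,
          (![-(α * P 0 0 + β * P 0 3), -(α * P 3 0 + β * P 3 3), β, α] i) •
          (![Q.mulVec (Pi.single 0 1), Q.mulVec (Pi.single 3 1),
            Q.mulVec (P.mulVec (Pi.single 3 1)), Q.mulVec (P.mulVec (Pi.single 0 1))] i) = 0 := by
        simpa only [Fin.sum_univ_four, Matrix.cons_val_zero, Matrix.cons_val_one,
          Matrix.head_cons, Matrix.cons_val_two, Matrix.tail_cons, Matrix.cons_val_three]
          using hsumv
      exact hα (hli hsum' 3)
    exact forward_aux (Q⁻¹*D*Q) (Q⁻¹*B*Q) lam κ κ' phi ψ ψ' hlam hκ hκ' hψ hψ'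
      hCE hMain (hsu D hDsu.1) (hsu B hB.1) hPdet hEta hNu hDet2
  · rintro ⟨h1, h2⟩
    subst h1; subst h2
    refine ⟨1, ⟨by simp, by simp⟩, by simp [inv_one], ?_⟩
    rw [hK, hK']
    simp [inv_one]
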